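/- For every even integer k ≥ 2, the systematic binary k×(k + k/2) matrix G = [I_k | A], where the j-th column of A equals e_{2j−1} + e_{2j} for j = 1,…,k/2, generates a [k + k/2, k, 2] batch code with reconstruction sets of size at most 2 whose minimum Hamming distance is d = 2; similarly, for every odd integer k ≥ 1, the systematic binary k×(k + (k+1)/2) matrix G = [I_k | A], where the j-th column of A equals e_{2j−1} + e_{2j} for j = 1,…,(k−1)/2 and the last column of A equals e_k, generates a [k + (k+1)/2, k, 2] batch code with reconstruction sets of size at most 2 and minimum distance d = 2. In both cases n = k + ⌈k/2⌉ = k + d + (t−1)·(⌈ k/(r·t − t − r + 2) ⌉ − 1) − 1 with r = t = 2, so these codes attain the systematic bound n ≥ k + d + max_{2≤β≤t}{(β−1)(⌈k/(rβ−β−r+2)⌉−1)} − 1 with equality. -/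

import Mathlib

/-- The sum of the columns of the binary matrix `G` indexed by `T` equals `v`. -/
def ColSumEq {k n : ℕ} (G : Matrix (Fin k) (Fin n) (ZMod 2))
    (T : Finset (Fin n)) (v : Fin k → ZMod 2) : Prop :=
  ∑ j ∈ T, G.transpose j = v

/-- `G` generates a binary `[n,k,2]` batch code with reconstruction sets of size ≤ 2. -/
def IsBatch2With2 {k n : ℕ} (G : Matrix (Fin k) (Fin n) (ZMod 2)) : Prop :=
  ∀ i₁ i₂ : Fin k, ∃ T₁ T₂ : Finset (Fin n),
    Disjoint T₁ T₂ ∧ T₁.card ≤ 2 ∧ T₂.card ≤ 2 ∧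
    ColSumEq G T₁ (Pi.single i₁ 1) ∧ ColSumEq G T₂ (Pi.single i₂ 1)

set_option linter.unnecessarySeqFocus false in
private lemma hn_two {n : ℕ} (y : Fin n → ZMod 2) (a b : Fin n) (hab : a ≠ b)
    (h : ∀ j, y j ≠ 0 ↔ j = a ∨ j = b) : hammingNorm y = 2 := by
  have hs : (Finset.univ.filter fun j => y j ≠ 0) = {a, b} := by
    ext j; simp [h j]
  unfold hammingNorm
  rw [hs, Finset.card_pair hab]

private lemma hn_ge_two {n : ℕ} (y : Fin n → ZMod 2) (a b : Fin n) (hab : a ≠ b)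
    (ha : y a ≠ 0) (hb : y b ≠ 0) : 2 ≤ hammingNorm y := by
  have hs : ({a, b} : Finset (Fin n)) ⊆ Finset.univ.filter fun j => y j ≠ 0 := by
    intro j hj
    simp only [Finset.mem_insert, Finset.mem_singleton] at hj
    rcases hj with rfl | rfl <;> simp [ha, hb]
  calc 2 = ({a, b} : Finset (Fin n)).card := (Finset.card_pair hab).symm
    _ ≤ _ := Finset.card_le_card hs
    _ = hammingNorm y := rfl

private lemma vecMul_ecol {k n : ℕ} (G : Matrix (Fin k) (Fin n) (ZMod 2))
    (x : Fin k → ZMod 2) (j : Fin n) (i : Fin k)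
    (h : ∀ r, G r j = if r = i then 1 else 0) : Matrix.vecMul x G j = x i := by
  simp only [Matrix.vecMul, dotProduct]
  rw [Fintype.sum_eq_single i (fun r hr => by rw [h r, if_neg hr, mul_zero])]
  rw [h i, if_pos rfl, mul_one]

private lemma vecMul_pcol {k n : ℕ} (G : Matrix (Fin k) (Fin n) (ZMod 2))
    (x : Fin k → ZMod 2) (j : Fin n) (i p : Fin k) (hxp : x p = 0)
    (h : ∀ r, G r j = if r = i ∨ r = p then 1 else 0) : Matrix.vecMul x G j = x i := by
  simp only [Matrix.vecMul, dotProduct]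
  rw [Fintype.sum_eq_single i]
  · rw [h i, if_pos (Or.inl rfl), mul_one]
  · intro r hr
    by_cases hrp : r = p
    · subst hrp; rw [hxp, zero_mul]
    · rw [h r, if_neg (by tauto), mul_zero]

private lemma colsum_single {k n : ℕ} (G : Matrix (Fin k) (Fin n) (ZMod 2)) (j : Fin n)
    (i : Fin k) (h : ∀ r, G r j = if r = i then 1 else 0) :
    ColSumEq G {j} (Pi.single i 1) := by
  unfold ColSumEq
  rw [Finset.sum_singleton (fun j => G.transpose j) j]
  funext r
  simp [Matrix.transpose_apply, h r, Pi.single_apply]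

private lemma colsum_pair {k n : ℕ} (G : Matrix (Fin k) (Fin n) (ZMod 2)) (a b : Fin n)
    (hab : a ≠ b) (i p : Fin k) (hip : i ≠ p)
    (ha : ∀ r, G r a = if r = p then 1 else 0)
    (hb : ∀ r, G r b = if r = i ∨ r = p then 1 else 0) :
    ColSumEq G {a, b} (Pi.single i 1) := by
  unfold ColSumEq
  rw [Finset.sum_pair (f := fun j => G.transpose j) hab]
  funext r
  simp only [Pi.add_apply, Matrix.transpose_apply, ha r, hb r, Pi.single_apply]
  by_cases h1 : r = i <;> by_cases h2 : r = p <;> simp_all <;> rfl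

private lemma even_case (k : ℕ) (hk2 : 2 ≤ k) (hk : k % 2 = 0)
    (G : Matrix (Fin k) (Fin (k + k / 2)) (ZMod 2))
    (hG : ∀ (i : Fin k) (j : Fin (k + k / 2)),
        G i j =
          if (j : ℕ) < k then (if (i : ℕ) = (j : ℕ) then 1 else 0)
          else (if (i : ℕ) = 2 * ((j : ℕ) - k) ∨ (i : ℕ) = 2 * ((j : ℕ) - k) + 1
                then 1 else 0)) :
    IsBatch2With2 G ∧
    IsLeast {w : ℕ | ∃ x : Fin k → ZMod 2, x ≠ 0 ∧ hammingNorm (Matrix.vecMul x G) = w} 2 ∧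
    k + k / 2 = k + 2 + (2 - 1) * ((k + 1) / 2 - 1) - 1 := by
  -- systematic columns
  have sysle : ∀ i : Fin k, (i : ℕ) < k + k / 2 := fun i => by omega
  let sys : Fin k → Fin (k + k / 2) := fun i => ⟨i, sysle i⟩
  have hsys : ∀ i : Fin k, ∀ r, G r (sys i) = if r = i then 1 else 0 := by
    intro i r
    rw [hG]
    simp only [sys, Fin.ext_iff, Fin.val_mk]
    rw [if_pos i.isLt]
  -- parity column for i
  have parle : ∀ i : Fin k, k + (i : ℕ) / 2 < k + k / 2 := fun i => by have := i.isLt; omega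
  let par : Fin k → Fin (k + k / 2) := fun i => ⟨k + (i : ℕ) / 2, parle i⟩
  -- partner of i
  have ptle : ∀ i : Fin k, 2 * ((i : ℕ) / 2) + (1 - (i : ℕ) % 2) < k := fun i => by
    have := i.isLt; omega
  let pt : Fin k → Fin k := fun i => ⟨2 * ((i : ℕ) / 2) + (1 - (i : ℕ) % 2), ptle i⟩
  have hptne : ∀ i : Fin k, i ≠ pt i := by
    intro i
    simp only [ne_eq, pt, Fin.ext_iff, Fin.val_mk]
    omega
  have hpar : ∀ i : Fin k, ∀ r, G r (par i) = if r = i ∨ r = pt i then 1 else 0 := by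
    intro i r
    rw [hG]
    rw [if_neg (by simp only [par]; omega)]
    refine if_congr ?_ rfl rfl
    simp only [par, pt, Fin.ext_iff, Fin.val_mk]
    have := i.isLt
    omega
  refine ⟨?_, ⟨?_, ?_⟩, by omega⟩
  · -- batch property
    intro i₁ i₂
    by_cases h : i₁ = i₂
    · subst h
      refine ⟨{sys i₁}, {sys (pt i₁), par i₁}, ?_, by simp,
        Finset.card_insert_le _ _ |>.trans (by simp), colsum_single G _ _ (hsys i₁), ?_⟩
      · simp only [Finset.disjoint_left, Finset.mem_singleton, Finset.mem_insert]
        rintro a rfl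
        push_neg
        constructor
        · simp only [ne_eq, sys, Fin.ext_iff, Fin.val_mk]
          have h1 := hptne i₁
          simp only [Ne, Fin.ext_iff] at h1
          exact h1
        · simp only [ne_eq, sys, par, Fin.ext_iff, Fin.val_mk]
          have := i₁.isLt; omega
      · refine colsum_pair G _ _ ?_ i₁ (pt i₁) (hptne i₁) (hsys (pt i₁)) (hpar i₁)
        simp only [ne_eq, sys, par, Fin.ext_iff, Fin.val_mk]
        have := (pt i₁).isLt; omega
    · refine ⟨{sys i₁}, {sys i₂}, ?_, by simp, by simp,
        colsum_single G _ _ (hsys i₁), colsum_single G _ _ (hsys i₂)⟩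
      simp only [Finset.disjoint_singleton]
      simp only [ne_eq, sys, Fin.ext_iff, Fin.val_mk]
      exact fun hv => h (Fin.ext hv)
  · -- membership : weight-2 codeword
    have h0k : (0 : ℕ) < k := by omega
    set i0 : Fin k := ⟨0, h0k⟩ with hi0
    have hi0v : (i0 : ℕ) = 0 := rfl
    refine ⟨Pi.single i0 1, ?_, ?_⟩
    · intro hc
      have := congrFun hc i0
      simp [Pi.single_apply] at this
    · have hy : ∀ j, Matrix.vecMul (Pi.single i0 (1 : ZMod 2)) G j = G i0 j := by
        intro j
        simp only [Matrix.vecMul, dotProduct]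
        rw [Fintype.sum_eq_single i0
          (fun r hr => by rw [Pi.single_apply, if_neg hr, zero_mul])]
        rw [Pi.single_apply, if_pos rfl, one_mul]
      have hkn : k < k + k / 2 := by omega
      refine hn_two _ (sys i0) ⟨k, hkn⟩ (by simp only [ne_eq, sys, Fin.ext_iff, Fin.val_mk]; omega) ?_
      intro j
      rw [hy j, hG]
      simp only [sys, Fin.ext_iff, Fin.val_mk]
      split_ifs with h1 h2 h3 <;> simp_all <;> omega
  · -- lower bound
    rintro w ⟨x, hx, rfl⟩
    obtain ⟨i, hi⟩ := Function.ne_iff.mp hx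
    simp only [Pi.zero_apply] at hi
    by_cases hone : ∀ r, r ≠ i → x r = 0
    · have h2 : Matrix.vecMul x G (par i) = x i :=
        vecMul_pcol G x (par i) i (pt i) (hone _ fun hc => hptne i hc.symm) (hpar i)
      refine hn_ge_two _ (sys i) (par i) ?_ ?_ ?_
      · simp only [ne_eq, sys, par, Fin.ext_iff, Fin.val_mk]
        have := i.isLt; omega
      · rw [vecMul_ecol G x (sys i) i (hsys i)]; exact hi
      · rw [h2]; exact hi
    · push_neg at hone
      obtain ⟨r, hr, hxr⟩ := hone
      refine hn_ge_two _ (sys i) (sys r) ?_ ?_ ?_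
      · simp only [ne_eq, sys, Fin.ext_iff, Fin.val_mk]
        exact fun hv => hr (Fin.ext hv.symm)
      · rw [vecMul_ecol G x (sys i) i (hsys i)]; exact hi
      · rw [vecMul_ecol G x (sys r) r (hsys r)]; exact hxr

private lemma odd_case (k : ℕ) (hk1 : 1 ≤ k) (hk : k % 2 = 1)
    (G : Matrix (Fin k) (Fin (k + (k + 1) / 2)) (ZMod 2))
    (hG : ∀ (i : Fin k) (j : Fin (k + (k + 1) / 2)),
        G i j =
          if (j : ℕ) < k then (if (i : ℕ) = (j : ℕ) then 1 else 0)
          else if (j : ℕ) < k + (k - 1) / 2 then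
            (if (i : ℕ) = 2 * ((j : ℕ) - k) ∨ (i : ℕ) = 2 * ((j : ℕ) - k) + 1
             then 1 else 0)
          else (if (i : ℕ) = k - 1 then 1 else 0)) :
    IsBatch2With2 G ∧
    IsLeast {w : ℕ | ∃ x : Fin k → ZMod 2, x ≠ 0 ∧ hammingNorm (Matrix.vecMul x G) = w} 2 ∧
    k + (k + 1) / 2 = k + 2 + (2 - 1) * ((k + 1) / 2 - 1) - 1 := by
  have sysle : ∀ i : Fin k, (i : ℕ) < k + (k + 1) / 2 := fun i => by have := i.isLt; omega
  let sys : Fin k → Fin (k + (k + 1) / 2) := fun i => ⟨i, sysle i⟩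
  have hsys : ∀ i : Fin k, ∀ r, G r (sys i) = if r = i then 1 else 0 := by
    intro i r
    rw [hG]
    simp only [sys, Fin.ext_iff, Fin.val_mk]
    rw [if_pos i.isLt]
  -- the last column
  have hcle : k + (k - 1) / 2 < k + (k + 1) / 2 := by omega
  let c : Fin (k + (k + 1) / 2) := ⟨k + (k - 1) / 2, hcle⟩
  have hlast : ∀ i : Fin k, (i : ℕ) = k - 1 → ∀ r, G r c = if r = i then 1 else 0 := by
    intro i hiv r
    rw [hG]
    rw [if_neg (by simp only [c, Fin.val_mk]; omega),
      if_neg (by simp only [c, Fin.val_mk]; omega)]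
    refine if_congr ?_ rfl rfl
    simp only [Fin.ext_iff]
    omega
  -- parity columns, for i with i < k - 1
  have parle : ∀ i : Fin k, (i : ℕ) < k - 1 → k + (i : ℕ) / 2 < k + (k + 1) / 2 :=
    fun i hi => by omega
  have ptle : ∀ i : Fin k, (i : ℕ) < k - 1 → 2 * ((i : ℕ) / 2) + (1 - (i : ℕ) % 2) < k :=
    fun i hi => by omega
  have hptne : ∀ i : Fin k, ∀ h : (i : ℕ) < k - 1, i ≠ ⟨2 * ((i : ℕ) / 2) + (1 - (i : ℕ) % 2), ptle i h⟩ := by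
    intro i h
    simp only [ne_eq, Fin.ext_iff, Fin.val_mk]
    omega
  have hpar : ∀ i : Fin k, ∀ h : (i : ℕ) < k - 1, ∀ r,
      G r ⟨k + (i : ℕ) / 2, parle i h⟩ =
        if r = i ∨ r = ⟨2 * ((i : ℕ) / 2) + (1 - (i : ℕ) % 2), ptle i h⟩ then 1 else 0 := by
    intro i h r
    rw [hG]
    rw [if_neg (by simp only [Fin.val_mk]; omega),
      if_pos (by simp only [Fin.val_mk]; omega)]
    refine if_congr ?_ rfl rfl
    simp only [Fin.ext_iff, Fin.val_mk]
    have := i.isLt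
    omega
  refine ⟨?_, ⟨?_, ?_⟩, by omega⟩
  · -- batch property
    intro i₁ i₂
    by_cases h : i₁ = i₂
    · subst h
      by_cases hiv : (i₁ : ℕ) = k - 1
      · refine ⟨{sys i₁}, {c}, ?_, by simp, by simp,
          colsum_single G _ _ (hsys i₁), colsum_single G _ _ (hlast i₁ hiv)⟩
        simp only [Finset.disjoint_singleton, ne_eq, sys, c, Fin.ext_iff, Fin.val_mk]
        have := i₁.isLt
        omega
      · have hlt : (i₁ : ℕ) < k - 1 := by have := i₁.isLt; omega
        refine ⟨{sys i₁}, {sys ⟨2 * ((i₁ : ℕ) / 2) + (1 - (i₁ : ℕ) % 2), ptle i₁ hlt⟩,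
          ⟨k + (i₁ : ℕ) / 2, parle i₁ hlt⟩}, ?_,
          by simp, Finset.card_insert_le _ _ |>.trans (by simp),
          colsum_single G _ _ (hsys i₁), ?_⟩
        · simp only [Finset.disjoint_left, Finset.mem_singleton, Finset.mem_insert]
          rintro a rfl
          push_neg
          constructor
          · simp only [ne_eq, sys, Fin.ext_iff, Fin.val_mk]
            omega
          · simp only [ne_eq, sys, Fin.ext_iff, Fin.val_mk]
            have := i₁.isLt
            omega
        · refine colsum_pair G _ _ ?_ i₁ _ (hptne i₁ hlt) (hsys _) (hpar i₁ hlt)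
          simp only [ne_eq, sys, Fin.ext_iff, Fin.val_mk]
          omega
    · refine ⟨{sys i₁}, {sys i₂}, ?_, by simp, by simp,
        colsum_single G _ _ (hsys i₁), colsum_single G _ _ (hsys i₂)⟩
      simp only [Finset.disjoint_singleton]
      simp only [ne_eq, sys, Fin.ext_iff, Fin.val_mk]
      exact fun hv => h (Fin.ext hv)
  · -- membership
    have h0k : (0 : ℕ) < k := by omega
    set i0 : Fin k := ⟨0, h0k⟩ with hi0
    have hi0v : (i0 : ℕ) = 0 := rfl
    refine ⟨Pi.single i0 1, ?_, ?_⟩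
    · intro hc
      have := congrFun hc i0
      simp [Pi.single_apply] at this
    · have hy : ∀ j, Matrix.vecMul (Pi.single i0 (1 : ZMod 2)) G j = G i0 j := by
        intro j
        simp only [Matrix.vecMul, dotProduct]
        rw [Fintype.sum_eq_single i0
          (fun r hr => by rw [Pi.single_apply, if_neg hr, zero_mul])]
        rw [Pi.single_apply, if_pos rfl, one_mul]
      have hkn : k < k + (k + 1) / 2 := by omega
      refine hn_two _ (sys i0) ⟨k, hkn⟩ (by simp only [ne_eq, sys, Fin.ext_iff, Fin.val_mk]; omega) ?_
      intro j
      rw [hy j, hG]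
      simp only [sys, Fin.ext_iff, Fin.val_mk]
      have hj := j.isLt
      clear hy hG hsys hlast hpar hptne parle ptle c hcle hkn hi0
      split_ifs <;> simp_all <;> omega
  · -- lower bound
    rintro w ⟨x, hx, rfl⟩
    obtain ⟨i, hi⟩ := Function.ne_iff.mp hx
    simp only [Pi.zero_apply] at hi
    by_cases hone : ∀ r, r ≠ i → x r = 0
    · by_cases hiv : (i : ℕ) = k - 1
      · refine hn_ge_two _ (sys i) c ?_ ?_ ?_
        · simp only [ne_eq, sys, c, Fin.ext_iff, Fin.val_mk]
          have := i.isLt; omega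
        · rw [vecMul_ecol G x (sys i) i (hsys i)]; exact hi
        · rw [vecMul_ecol G x c i (hlast i hiv)]; exact hi
      · have hlt : (i : ℕ) < k - 1 := by have := i.isLt; omega
        have h2 : Matrix.vecMul x G ⟨k + (i : ℕ) / 2, parle i hlt⟩ = x i :=
          vecMul_pcol G x _ i _ (hone _ fun hc => (hptne i hlt) hc.symm) (hpar i hlt)
        refine hn_ge_two _ (sys i) ⟨k + (i : ℕ) / 2, parle i hlt⟩ ?_ ?_ ?_
        · simp only [ne_eq, sys, Fin.ext_iff, Fin.val_mk]
          have := i.isLt; omega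
        · rw [vecMul_ecol G x (sys i) i (hsys i)]; exact hi
        · rw [h2]; exact hi
    · push_neg at hone
      obtain ⟨r, hr, hxr⟩ := hone
      refine hn_ge_two _ (sys i) (sys r) ?_ ?_ ?_
      · simp only [ne_eq, sys, Fin.ext_iff, Fin.val_mk]
        exact fun hv => hr (Fin.ext hv.symm)
      · rw [vecMul_ecol G x (sys i) i (hsys i)]; exact hi
      · rw [vecMul_ecol G x (sys r) r (hsys r)]; exact hxr

/-- **Optimal systematic batch codes with `r = t = 2` (Zhang–Skachek).**
For even `k`, the systematic matrix `[I_k | A]` with columns of `A` equal to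
`e_{2j−1}+e_{2j}` generates a `[k + k/2, k, 2]` batch code with reconstruction sets of
size at most `2` and minimum distance `d = 2`; for odd `k`, the analogous matrix with an
extra column `e_k` generates a `[k + (k+1)/2, k, 2]` such code with `d = 2`.  In both
cases `n = k + ⌈k/2⌉ = k + d + (t−1)·(⌈k/(rt−t−r+2)⌉ − 1) − 1` with `r = t = 2`, so the
systematic bound is attained with equality. -/
theorem optimal_batch_r2_t2 :
    (∀ k : ℕ, 2 ≤ k → k % 2 = 0 →
      ∀ G : Matrix (Fin k) (Fin (k + k / 2)) (ZMod 2),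
      (∀ (i : Fin k) (j : Fin (k + k / 2)),
          G i j =
            if (j : ℕ) < k then (if (i : ℕ) = (j : ℕ) then 1 else 0)
            else (if (i : ℕ) = 2 * ((j : ℕ) - k) ∨ (i : ℕ) = 2 * ((j : ℕ) - k) + 1
                  then 1 else 0)) →
      IsBatch2With2 G ∧
      IsLeast {w : ℕ | ∃ x : Fin k → ZMod 2, x ≠ 0 ∧ hammingNorm (Matrix.vecMul x G) = w} 2 ∧
      k + k / 2 = k + 2 + (2 - 1) * ((k + 1) / 2 - 1) - 1) ∧
    (∀ k : ℕ, 1 ≤ k → k % 2 = 1 →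
      ∀ G : Matrix (Fin k) (Fin (k + (k + 1) / 2)) (ZMod 2),
      (∀ (i : Fin k) (j : Fin (k + (k + 1) / 2)),
          G i j =
            if (j : ℕ) < k then (if (i : ℕ) = (j : ℕ) then 1 else 0)
            else if (j : ℕ) < k + (k - 1) / 2 then
              (if (i : ℕ) = 2 * ((j : ℕ) - k) ∨ (i : ℕ) = 2 * ((j : ℕ) - k) + 1
               then 1 else 0)
            else (if (i : ℕ) = k - 1 then 1 else 0)) →
      IsBatch2With2 G ∧
      IsLeast {w : ℕ | ∃ x : Fin k → ZMod 2, x ≠ 0 ∧ hammingNorm (Matrix.vecMul x G) = w} 2 ∧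
      k + (k + 1) / 2 = k + 2 + (2 - 1) * ((k + 1) / 2 - 1) - 1) := by
  exact ⟨fun k hk2 hk G hG => even_case k hk2 hk G hG,
    fun k hk1 hk G hG => odd_case k hk1 hk G hG⟩
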